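/- Let Λ be a row-finite, locally convex k-graph. Suppose Λ has local periodicity m, n at v ∈ Λ^0 (m ≠ n ∈ ℕ^k), let x ∈ vΛ^{≤∞}, and let z := μαy where μ := x(0, m∧d(x)), α := x(m∧d(x), (m∨n)∧d(x)), and y ∈ s(α)Λ^{≤∞} is any boundary path. Then m ∧ d(z) = m ∧ d(x) and n ∧ d(z) = n ∧ d(x). -/

import Mathlib

open scoped ENat

/-- `q ≤ m` coordinatewise, where `q ∈ ℕ^k` and `m ∈ (ℕ ∪ {∞})^k`. -/
def leDeg (k : ℕ) (q : Fin k → ℕ) (m : Fin k → ℕ∞) : Prop :=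
  ∀ i, (q i : ℕ∞) ≤ m i

/-- The coordinatewise minimum `m ∧ d` of `m ∈ ℕ^k` and `d ∈ (ℕ ∪ {∞})^k`,
viewed as an element of `ℕ^k`. -/
noncomputable def wedge {k : ℕ} (m : Fin k → ℕ) (dx : Fin k → ℕ∞) : Fin k → ℕ :=
  fun i => ((m i : ℕ∞) ⊓ dx i).toNat

lemma wedge_coe {k : ℕ} (m : Fin k → ℕ) (dx : Fin k → ℕ∞) (i : Fin k) :
    ((wedge m dx i : ℕ)  : ℕ∞) = (m i : ℕ∞) ⊓ dx i := by
  have h : (m i : ℕ∞) ⊓ dx i ≠ ⊤ :=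
    (inf_le_left.trans_lt (ENat.coe_lt_top (m i))).ne
  simpa [wedge] using ENat.coe_toNat h

lemma wedge_leDeg {k : ℕ} (m : Fin k → ℕ) (dx : Fin k → ℕ∞) :
    leDeg k (wedge m dx) dx := by
  intro i
  rw [wedge_coe]
  exact inf_le_right

/-- The data of a countable-free small category with a degree map: the underlying data
of a `k`-graph. -/
structure KGraphData (k : ℕ) where
  Obj : Type
  Mor : Type
  r : Mor → Obj
  s : Mor → Obj
  idm : Obj → Mor
  comp : Mor → Mor → Mor
  d : Mor → Fin k → ℕ

/-- The axioms making `Λ` a `k`-graph: a small category together with a degree functor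
`d : Λ → ℕ^k` satisfying the factorisation property. (Composition `comp f g` is only
constrained when `s f = r g`.) -/
structure IsKGraph {k : ℕ} (Λ : KGraphData k) : Prop where
  r_id : ∀ v, Λ.r (Λ.idm v) = v
  s_id : ∀ v, Λ.s (Λ.idm v) = v
  id_comp : ∀ f, Λ.comp (Λ.idm (Λ.r f)) f = f
  comp_id : ∀ f, Λ.comp f (Λ.idm (Λ.s f)) = f
  r_comp : ∀ f g, Λ.s f = Λ.r g → Λ.r (Λ.comp f g) = Λ.r f
  s_comp : ∀ f g, Λ.s f = Λ.r g → Λ.s (Λ.comp f g) = Λ.s g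
  assoc : ∀ f g h, Λ.s f = Λ.r g → Λ.s g = Λ.r h →
    Λ.comp (Λ.comp f g) h = Λ.comp f (Λ.comp g h)
  d_id : ∀ v, Λ.d (Λ.idm v) = 0
  d_comp : ∀ f g, Λ.s f = Λ.r g → Λ.d (Λ.comp f g) = Λ.d f + Λ.d g
  factor : ∀ (f : Λ.Mor) (m n : Fin k → ℕ), Λ.d f = m + n →
    ∃! p : Λ.Mor × Λ.Mor, Λ.s p.1 = Λ.r p.2 ∧ Λ.d p.1 = m ∧ Λ.d p.2 = n ∧
      Λ.comp p.1 p.2 = f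

/-- `Λ` is row-finite: `vΛ^n` is finite for every vertex `v` and degree `n`. -/
def RowFinite {k : ℕ} (Λ : KGraphData k) : Prop :=
  ∀ (v : Λ.Obj) (n : Fin k → ℕ), {f : Λ.Mor | Λ.r f = v ∧ Λ.d f = n}.Finite

/-- `Λ` is locally convex. -/
def LocallyConvex {k : ℕ} (Λ : KGraphData k) : Prop :=
  ∀ (i j : Fin k), i ≠ j → ∀ lam mu : Λ.Mor,
    Λ.d lam = Pi.single i 1 → Λ.d mu = Pi.single j 1 → Λ.r lam = Λ.r mu →
    (∃ f, Λ.r f = Λ.s lam ∧ Λ.d f = Pi.single j 1) ∧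
    (∃ g, Λ.r g = Λ.s mu ∧ Λ.d g = Pi.single i 1)

/-- A boundary path of `Λ`: a degree-preserving functor `x : Ω_{k,m} → Λ`
(encoded by its vertex map `vert` and segment map `seg`, constrained on
pairs `p ≤ q ≤ m = deg`) such that whenever `p ≤ m` and `p i = m i`,
`x(p)Λ^{e_i} = ∅`. -/
structure BPath (k : ℕ) (Λ : KGraphData k) where
  deg : Fin k → ℕ∞
  vert : (Fin k → ℕ) → Λ.Obj
  seg : (Fin k → ℕ) → (Fin k → ℕ) → Λ.Mor
  seg_r : ∀ p q, p ≤ q → leDeg k q deg → Λ.r (seg p q) = vert p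
  seg_s : ∀ p q, p ≤ q → leDeg k q deg → Λ.s (seg p q) = vert q
  seg_deg : ∀ p q, p ≤ q → leDeg k q deg → Λ.d (seg p q) = q - p
  seg_id : ∀ p, leDeg k p deg → seg p p = Λ.idm (vert p)
  seg_comp : ∀ p q t, p ≤ q → q ≤ t → leDeg k t deg →
    Λ.comp (seg p q) (seg q t) = seg p t
  boundary : ∀ (p : Fin k → ℕ) (i : Fin k), leDeg k p deg → (p i : ℕ∞) = deg i →
    ∀ e : Λ.Mor, Λ.r e = vert p → Λ.d e ≠ Pi.single i 1

/-- Equality of boundary paths as functors: same degree and the same segments on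
the common (valid) domain. -/
def BPath.eqv {k : ℕ} {Λ : KGraphData k} (x y : BPath k Λ) : Prop :=
  x.deg = y.deg ∧ ∀ p q, p ≤ q → leDeg k q x.deg → x.seg p q = y.seg p q

lemma leDeg_add {k : ℕ} {n q : Fin k → ℕ} {D : Fin k → ℕ∞}
    (hn : leDeg k n D) (hq : leDeg k q (fun i => D i - (n i : ℕ∞))) :
    leDeg k (q + n) D := by
  intro i
  have hqi := hq i
  have hni := hn i
  by_cases hD : D i = ⊤
  · rw [hD]; exact le_top
  · lift D i to ℕ using hD with a ha
    rw [show ((a : ℕ∞) - (n i : ℕ∞)) = ((a - n i : ℕ) : ℕ∞) by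
      exact_mod_cast (ENat.coe_sub a (n i)).symm] at hqi
    have h1 : q i ≤ a - n i := by exact_mod_cast hqi
    have h2 : n i ≤ a := by exact_mod_cast hni
    have h3 : q i + n i ≤ a := by omega
    show ((q i + n i : ℕ) : ℕ∞) ≤ (a : ℕ∞)
    exact_mod_cast h3

/-- The shift `σ^n(x)` of a boundary path `x` by `n ≤ d(x)`. -/
def BPath.shift {k : ℕ} {Λ : KGraphData k} (x : BPath k Λ) (n : Fin k → ℕ)
    (h : leDeg k n x.deg) : BPath k Λ where
  deg := fun i => x.deg i - (n i : ℕ∞)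
  vert := fun p => x.vert (p + n)
  seg := fun p q => x.seg (p + n) (q + n)
  seg_r := fun p q hpq hq =>
    x.seg_r (p + n) (q + n) (add_le_add_left hpq n) (leDeg_add h hq)
  seg_s := fun p q hpq hq =>
    x.seg_s (p + n) (q + n) (add_le_add_left hpq n) (leDeg_add h hq)
  seg_deg := by
    intro p q hpq hq
    rw [x.seg_deg (p + n) (q + n) (add_le_add_left hpq n) (leDeg_add h hq)]
    funext i
    simp only [Pi.sub_apply, Pi.add_apply]
    omega
  seg_id := by
    intro p hp
    show x.seg (p + n) (p + n) = _
    rw [x.seg_id (p + n) (leDeg_add h hp)]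
  seg_comp := fun p q t hpq hqt ht =>
    x.seg_comp (p + n) (q + n) (t + n) (add_le_add_left hpq n)
      (add_le_add_left hqt n) (leDeg_add h ht)
  boundary := by
    intro p i hp hpi e he
    refine x.boundary (p + n) i (leDeg_add h hp) ?_ e he
    have hni := h i
    have hpi' : (p i : ℕ∞) = x.deg i - (n i : ℕ∞) := hpi
    clear hpi
    by_cases hD : x.deg i = ⊤
    · rw [hD] at hpi'
      simp at hpi'
    · lift x.deg i to ℕ using hD with a ha
      rw [show ((a : ℕ∞) - (n i : ℕ∞)) = ((a - n i : ℕ) : ℕ∞) by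
        exact_mod_cast (ENat.coe_sub a (n i)).symm] at hpi'
      have h1 : p i = a - n i := by exact_mod_cast hpi'
      have h2 : n i ≤ a := by exact_mod_cast hni
      have h3 : p i + n i = a := by omega
      show ((p i + n i : ℕ) : ℕ∞) = (a : ℕ∞)
      exact_mod_cast h3

/-- The relation `∼` on `V_Λ = Λ^{≤∞} × ℕ^k`. -/
def VRel {k : ℕ} {Λ : KGraphData k} (a b : BPath k Λ × (Fin k → ℕ)) : Prop :=
  a.1.vert (wedge a.2 a.1.deg) = b.1.vert (wedge b.2 b.1.deg) ∧
  a.2 - wedge a.2 a.1.deg = b.2 - wedge b.2 b.1.deg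

/-- The relation `≈` on `P_Λ = {(x;(m,n)) : x ∈ Λ^{≤∞}, m ≤ n}`
(as a relation on all triples). -/
def PRel {k : ℕ} {Λ : KGraphData k}
    (a b : BPath k Λ × (Fin k → ℕ) × (Fin k → ℕ)) : Prop :=
  a.1.seg (wedge a.2.1 a.1.deg) (wedge a.2.2 a.1.deg) =
    b.1.seg (wedge b.2.1 b.1.deg) (wedge b.2.2 b.1.deg) ∧
  a.2.1 - wedge a.2.1 a.1.deg = b.2.1 - wedge b.2.1 b.1.deg ∧
  a.2.2 - a.2.1 = b.2.2 - b.2.1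

/-- `z` is the concatenation `λ x` of the morphism `lam` with the boundary path `x`:
`z` has degree `d(lam) + d(x)`, `z(0, d lam) = lam`, and
`z(d lam, d lam + p) = x(0, p)` for all `p ≤ d(x)`. -/
def IsConcat {k : ℕ} (Λ : KGraphData k) (lam : Λ.Mor) (x z : BPath k Λ) : Prop :=
  z.deg = (fun i => (Λ.d lam i : ℕ∞) + x.deg i) ∧
  z.seg 0 (Λ.d lam) = lam ∧
  ∀ p, leDeg k p x.deg → z.seg (Λ.d lam) (Λ.d lam + p) = x.seg 0 p

/-- `Λ` has local periodicity `m, n` at the vertex `v`: for every boundary path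
`x ∈ vΛ^{≤∞}`, `m − m∧d(x) = n − n∧d(x)` and `σ^{m∧d(x)}(x) = σ^{n∧d(x)}(x)`. -/
def LocalPeriodicity {k : ℕ} (Λ : KGraphData k) (m n : Fin k → ℕ) (v : Λ.Obj) : Prop :=
  ∀ x : BPath k Λ, x.vert 0 = v →
    (m - wedge m x.deg = n - wedge n x.deg) ∧
    BPath.eqv (x.shift (wedge m x.deg) (wedge_leDeg m x.deg))
      (x.shift (wedge n x.deg) (wedge_leDeg n x.deg))

/-- Suppose `Λ` has local periodicity `m, n` at `v` (`m ≠ n`),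
`x ∈ vΛ^{≤∞}`, and `z := μαy` where `μ := x(0, m∧d(x))`,
`α := x(m∧d(x), (m∨n)∧d(x))` and `y ∈ s(α)Λ^{≤∞}`. Then
`m ∧ d(z) = m ∧ d(x)` and `n ∧ d(z) = n ∧ d(x)`. -/
theorem wedge_deg_concat (k : ℕ) (hk : 1 ≤ k) (Λ : KGraphData k)
    (hΛ : IsKGraph Λ) (hrf : RowFinite Λ) (hlc : LocallyConvex Λ)
    (v : Λ.Obj) (m n : Fin k → ℕ) (hmn : m ≠ n)
    (hlp : LocalPeriodicity Λ m n v) (x : BPath k Λ) (hx : x.vert 0 = v)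
    (y : BPath k Λ)
    (hy : y.vert 0 = Λ.s (x.seg (wedge m x.deg) (wedge (m ⊔ n) x.deg)))
    (z : BPath k Λ)
    (hz : IsConcat Λ
      (Λ.comp (x.seg 0 (wedge m x.deg))
        (x.seg (wedge m x.deg) (wedge (m ⊔ n) x.deg))) y z) :
    wedge m z.deg = wedge m x.deg ∧ wedge n z.deg = wedge n x.deg := by
  set wm := wedge m x.deg with hwm
  set wmn := wedge (m ⊔ n) x.deg with hwmn
  have hle : wm ≤ wmn := by
    intro i
    have : ((wm i : ℕ) : ℕ∞) ≤ (wmn i : ℕ∞) := by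
      rw [wedge_coe, wedge_coe]
      exact inf_le_inf_right _ (by exact_mod_cast le_sup_left)
    exact_mod_cast this
  have hldm : leDeg k wm x.deg := wedge_leDeg m x.deg
  have hldmn : leDeg k wmn x.deg := wedge_leDeg (m ⊔ n) x.deg
  have hsr : Λ.s (x.seg 0 wm) = Λ.r (x.seg wm wmn) := by
    rw [x.seg_s 0 wm (by intro i; exact Nat.zero_le _) hldm,
      x.seg_r wm wmn hle hldmn]
  -- degree of μα is wmn
  have hdeg : Λ.d (Λ.comp (x.seg 0 wm) (x.seg wm wmn)) = wmn := by
    rw [hΛ.d_comp _ _ hsr, x.seg_deg 0 wm (by intro i; exact Nat.zero_le _) hldm,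
      x.seg_deg wm wmn hle hldmn]
    funext i
    simp only [Pi.add_apply, Pi.sub_apply, Pi.zero_apply]
    have h : wm i ≤ wmn i := hle i
    omega
  have hzdeg : ∀ i, z.deg i = (wmn i : ℕ∞) + y.deg i := by
    intro i
    rw [hz.1]
    simp [hdeg]
  -- if x.deg i ≤ (m ⊔ n) i then y.deg i = 0
  have hy0 : ∀ i, x.deg i ≤ (((m ⊔ n) i : ℕ) : ℕ∞) → y.deg i = 0 := by
    intro i hxi
    by_contra hne
    have h1 : 1 ≤ y.deg i := ENat.one_le_iff_ne_zero.mpr hne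
    have hld1 : leDeg k (Pi.single i 1) y.deg := by
      intro j
      by_cases hj : j = i
      · subst hj; simpa using h1
      · simp [Pi.single_apply, hj]
    have hwmni : (wmn i : ℕ∞) = x.deg i := by
      rw [hwmn, wedge_coe]
      exact inf_eq_right.mpr hxi
    have hre : Λ.r (y.seg 0 (Pi.single i 1)) = x.vert wmn := by
      rw [y.seg_r 0 (Pi.single i 1) (by intro j; exact Nat.zero_le _) hld1, hy,
        x.seg_s wm wmn hle hldmn]
    have hde : Λ.d (y.seg 0 (Pi.single i 1)) = Pi.single i 1 := by
      rw [y.seg_deg 0 (Pi.single i 1) (by intro j; exact Nat.zero_le _) hld1]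
      simp
    exact x.boundary wmn i hldmn hwmni (y.seg 0 (Pi.single i 1)) hre hde
  have key : ∀ a : Fin k → ℕ, a ≤ m ⊔ n → wedge a z.deg = wedge a x.deg := by
    intro a ha
    funext i
    have : ((a i : ℕ∞) ⊓ z.deg i) = ((a i : ℕ∞) ⊓ x.deg i) := by
      rcases le_or_gt ((a i : ℕ)  : ℕ∞) (x.deg i) with h | h
      · have h2 : ((a i : ℕ) : ℕ∞) ≤ z.deg i := by
          rw [hzdeg i]
          refine le_trans ?_ le_self_add
          rw [hwmn, wedge_coe]
          exact le_inf (by exact_mod_cast ha i) h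
        rw [inf_eq_left.mpr h, inf_eq_left.mpr h2]
      · have hxle : x.deg i ≤ (((m ⊔ n) i : ℕ) : ℕ∞) :=
          le_trans h.le (by exact_mod_cast ha i)
        have hz2 : z.deg i = x.deg i := by
          rw [hzdeg i, hy0 i hxle, add_zero, hwmn, wedge_coe]
          exact inf_eq_right.mpr hxle
        rw [hz2]
    simp only [wedge, this]
  exact ⟨key m le_sup_left, key n le_sup_right⟩
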